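/- For α > 2, s > 0, and h > 0, ∫_0^h (1 - 1/(1 + s·t^(-α)))·t dt is positive and finite, and equals (h²/2) - ∫_0^h (t^(α+1)/(t^α + s)) dt; consequently the strongest-association Laplace transform with height h, L_I^S(s) = L_{I,0}^S(s)·exp(2πλ·∫_0^h (1 - 1/(1 + s·t^(-α)))·t dt), satisfies L_I^S(s) > L_{I,0}^S(s). -/

import Mathlib

open Real MeasureTheory Set intervalIntegral

theorem strongest_laplace_height_correction (α s h lam : ℝ)
    (hα : 2 < α) (hs : 0 < s) (hh : 0 < h) (hlam : 0 < lam) :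
    (0 < ∫ t in (0 : ℝ)..h, (1 - 1 / (1 + s * t ^ (-α))) * t) ∧
      IntegrableOn (fun t : ℝ => (1 - 1 / (1 + s * t ^ (-α))) * t) (Ioc 0 h) ∧
      (∫ t in (0 : ℝ)..h, (1 - 1 / (1 + s * t ^ (-α))) * t)
        = h ^ 2 / 2 - ∫ t in (0 : ℝ)..h, t ^ (α + 1) / (t ^ α + s) ∧
      Real.exp (-(2 * π * lam * ∫ t in Ioi (0 : ℝ), (1 - 1 / (1 + s * t ^ (-α))) * t)) *
          Real.exp (2 * π * lam * ∫ t in (0 : ℝ)..h, (1 - 1 / (1 + s * t ^ (-α))) * t)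
        > Real.exp (-(2 * π * lam * ∫ t in Ioi (0 : ℝ), (1 - 1 / (1 + s * t ^ (-α))) * t)) := by
  set f : ℝ → ℝ := fun t => (1 - 1 / (1 + s * t ^ (-α))) * t with hf
  set g : ℝ → ℝ := fun t => t ^ (α + 1) / (t ^ α + s) with hg
  have hmf : Measurable f := by
    rw [hf]; fun_prop
  have hmg : Measurable g := by
    rw [hg]; fun_prop
  -- pointwise bounds on (0, h]
  have hfpos : ∀ t : ℝ, 0 < t → 0 < f t := by
    intro t ht
    have h1 : 0 < s * t ^ (-α) := by positivity
    have h2 : 1 / (1 + s * t ^ (-α)) < 1 := by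
      rw [div_lt_one (by linarith)]; linarith
    have : 0 < 1 - 1 / (1 + s * t ^ (-α)) := by linarith
    exact mul_pos this ht
  have hfle : ∀ t : ℝ, 0 < t → f t ≤ t := by
    intro t ht
    have h1 : 0 < s * t ^ (-α) := by positivity
    have h2 : 0 < 1 / (1 + s * t ^ (-α)) := by positivity
    have : 1 - 1 / (1 + s * t ^ (-α)) ≤ 1 := by linarith
    calc f t ≤ 1 * t := mul_le_mul_of_nonneg_right this ht.le
    _ = t := one_mul t
  have hgnn : ∀ t : ℝ, 0 < t → 0 ≤ g t := by
    intro t ht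
    have := Real.rpow_pos_of_pos ht (α + 1)
    have := Real.rpow_pos_of_pos ht α
    positivity
  have hgle : ∀ t : ℝ, 0 < t → g t ≤ t := by
    intro t ht
    have ha : 0 < t ^ α := Real.rpow_pos_of_pos ht α
    have : t ^ (α + 1) = t ^ α * t := by
      rw [Real.rpow_add ht, Real.rpow_one]
    rw [hg]
    simp only
    rw [this, div_le_iff₀ (by linarith)]
    nlinarith
  -- integrability
  have hif : IntegrableOn f (Ioc 0 h) := by
    apply Integrable.mono' (g := fun _ => h)
      (integrableOn_const measure_Ioc_lt_top.ne)
      (hmf.aestronglyMeasurable.restrict)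
    filter_upwards [ae_restrict_mem measurableSet_Ioc] with t ht
    rw [Real.norm_eq_abs, abs_of_pos (hfpos t ht.1)]
    exact (hfle t ht.1).trans ht.2
  have hig : IntegrableOn g (Ioc 0 h) := by
    apply Integrable.mono' (g := fun _ => h)
      (integrableOn_const measure_Ioc_lt_top.ne)
      (hmg.aestronglyMeasurable.restrict)
    filter_upwards [ae_restrict_mem measurableSet_Ioc] with t ht
    rw [Real.norm_eq_abs, abs_of_nonneg (hgnn t ht.1)]
    exact (hgle t ht.1).trans ht.2
  have hiif : IntervalIntegrable f volume 0 h :=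
    (intervalIntegrable_iff_integrableOn_Ioc_of_le hh.le).2 hif
  have hiig : IntervalIntegrable g volume 0 h :=
    (intervalIntegrable_iff_integrableOn_Ioc_of_le hh.le).2 hig
  -- positivity of the interval integral
  have hpos : 0 < ∫ t in (0 : ℝ)..h, f t := by
    apply intervalIntegral.intervalIntegral_pos_of_pos_on hiif _ hh
    intro x hx
    exact hfpos x hx.1
  -- the identity
  have hkey : ∀ t ∈ Set.uIcc (0 : ℝ) h, f t = t - g t := by
    intro t ht
    rw [Set.uIcc_of_le hh.le] at ht
    rcases eq_or_lt_of_le ht.1 with h0 | h0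
    · rw [hf, hg]
      simp only [← h0]
      rw [Real.zero_rpow (by linarith : α + 1 ≠ 0)]
      simp
    · have ha : 0 < t ^ α := Real.rpow_pos_of_pos h0 α
      have hane : (t : ℝ) ^ α ≠ 0 := ne_of_gt ha
      have hinv : 0 < s * t ^ (-α) := by
        have := Real.rpow_pos_of_pos h0 (-α); positivity
      have hne : (1 + s * t ^ (-α)) ≠ 0 := by linarith
      rw [hf, hg]
      simp only
      rw [Real.rpow_neg h0.le, Real.rpow_add h0, Real.rpow_one]
      field_simp
  have heq : (∫ t in (0 : ℝ)..h, f t) = h ^ 2 / 2 - ∫ t in (0 : ℝ)..h, g t := by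
    rw [intervalIntegral.integral_congr hkey,
      intervalIntegral.integral_sub intervalIntegrable_id hiig,
      integral_id]
    ring
  refine ⟨hpos, hif, heq, ?_⟩
  have h2pi : 0 < 2 * π * lam := by positivity
  have hB : 0 < 2 * π * lam * ∫ t in (0 : ℝ)..h, f t := mul_pos h2pi hpos
  have : (1 : ℝ) < Real.exp (2 * π * lam * ∫ t in (0 : ℝ)..h, f t) := by
    rw [show (1 : ℝ) = Real.exp 0 from Real.exp_zero.symm]
    exact Real.exp_lt_exp.mpr hB
  calc Real.exp (-(2 * π * lam * ∫ t in Ioi (0 : ℝ), f t))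
      = Real.exp (-(2 * π * lam * ∫ t in Ioi (0 : ℝ), f t)) * 1 := (mul_one _).symm
    _ < _ := by
        apply mul_lt_mul_of_pos_left this (Real.exp_pos _)
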